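/- Under the i.i.d. sampling model where N_bb, N_sb ~ Binomial(n, 1-r) independently, for any τ ∈ (0, 1/2) and r ∈ (0, 1/2): (1-r)^n r^n ≤ P(α_b ≤ τ ∧ α_s ≤ τ) ≤ exp(-2(1-2τ)²(1-r)²n / (τ² + (1-τ)²)), where α_b = N_sb/(N_sb + N_bb) and α_s = (n - N_bb)/(2n - N_bb - N_sb). -/

import Mathlib

open MeasureTheory ProbabilityTheory

lemma hoeff_scalar {p : ℝ} (hp0 : 0 ≤ p) (hp1 : p ≤ 1) (s : ℝ) :
    (1 - p) + p * Real.exp s ≤ Real.exp (p * s + s ^ 2 / 8) := by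
  obtain ⟨q, hq⟩ : ∃ q : ℝ, q = 1 - p := ⟨_, rfl⟩
  rw [← hq]
  have hq0 : 0 ≤ q := by linarith
  have hd : ∀ x : ℝ, 0 < q + p * Real.exp x := by
    intro x
    rcases le_or_gt (Real.exp x) 1 with h | h
    · nlinarith [Real.exp_pos x]
    · nlinarith [Real.exp_pos x]
  set G : ℝ → ℝ := fun x => p + x / 4 - p * Real.exp x / (q + p * Real.exp x) with hGdef
  set F : ℝ → ℝ := fun x => p * x + x ^ 2 / 8 - Real.log (q + p * Real.exp x) with hFdef
  have hden : ∀ x : ℝ, HasDerivAt (fun x => q + p * Real.exp x) (p * Real.exp x) x := by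
    intro x
    simpa using ((Real.hasDerivAt_exp x).const_mul p).const_add q
  have hF : ∀ x, HasDerivAt F (G x) x := by
    intro x
    have h1 : HasDerivAt (fun x : ℝ => p * x) p x := by
      simpa using (hasDerivAt_id x).const_mul p
    have h2 : HasDerivAt (fun x : ℝ => x ^ 2 / 8) (x / 4) x := by
      have := (hasDerivAt_pow 2 x).div_const 8
      have e : ((2:ℕ):ℝ) * x ^ (2 - 1) / 8 = x / 4 := by norm_num; ring
      rw [e] at this; exact this
    have h3 : HasDerivAt (fun x => Real.log (q + p * Real.exp x))
        (p * Real.exp x / (q + p * Real.exp x)) x := (hden x).log (hd x).ne'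
    exact (h1.add h2).sub h3
  have hG : ∀ x, HasDerivAt G (1 / 4 - p * q * Real.exp x / (q + p * Real.exp x) ^ 2) x := by
    intro x
    have h2 : HasDerivAt (fun x : ℝ => p + x / 4) (1 / 4) x := by
      simpa using ((hasDerivAt_id x).div_const 4).const_add p
    have h3 : HasDerivAt (fun x => p * Real.exp x / (q + p * Real.exp x))
        ((p * Real.exp x * (q + p * Real.exp x) - p * Real.exp x * (p * Real.exp x)) /
          (q + p * Real.exp x) ^ 2) x := by
      exact HasDerivAt.div ((Real.hasDerivAt_exp x).const_mul p) (hden x) (hd x).ne'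
    have h4 : (p * Real.exp x * (q + p * Real.exp x) - p * Real.exp x * (p * Real.exp x)) /
          (q + p * Real.exp x) ^ 2 = p * q * Real.exp x / (q + p * Real.exp x) ^ 2 := by
      ring_nf
    rw [h4] at h3
    exact h2.sub h3
  have hGnn : ∀ x, 0 ≤ 1 / 4 - p * q * Real.exp x / (q + p * Real.exp x) ^ 2 := by
    intro x
    rw [sub_nonneg, div_le_iff₀ (pow_pos (hd x) 2)]
    have key : 1 / 4 * (q + p * Real.exp x) ^ 2 - p * q * Real.exp x
        = 1 / 4 * (q - p * Real.exp x) ^ 2 := by ring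
    linarith [sq_nonneg (q - p * Real.exp x), key]
  have hGmono : Monotone G := by
    have hdiff : Differentiable ℝ G := fun x => (hG x).differentiableAt
    apply monotone_of_deriv_nonneg hdiff
    intro x
    rw [(hG x).deriv]
    exact hGnn x
  have hG0 : G 0 = 0 := by
    simp only [hGdef]
    rw [Real.exp_zero]
    have : q + p * 1 = 1 := by rw [hq]; ring
    rw [this]
    ring
  have hdiffF : Differentiable ℝ F := fun x => (hF x).differentiableAt
  have hF0 : F 0 = 0 := by
    simp only [hFdef]
    rw [Real.exp_zero]
    have : q + p * 1 = 1 := by rw [hq]; ring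
    rw [this, Real.log_one]
    ring
  have hFnn : ∀ x, 0 ≤ F x := by
    intro x
    rcases le_or_gt 0 x with h | h
    · have hm : MonotoneOn F (Set.Ici 0) := by
        apply monotoneOn_of_deriv_nonneg (convex_Ici 0) hdiffF.continuous.continuousOn
          hdiffF.differentiableOn
        intro y hy
        rw [(hF y).deriv, ← hG0]
        exact hGmono (le_of_lt (by simpa using hy))
      rw [← hF0]
      exact hm (Set.mem_Ici.2 le_rfl) (Set.mem_Ici.2 h) h
    · have hm : AntitoneOn F (Set.Iic 0) := by
        apply antitoneOn_of_deriv_nonpos (convex_Iic 0) hdiffF.continuous.continuousOn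
          hdiffF.differentiableOn
        intro y hy
        rw [(hF y).deriv, ← hG0]
        exact hGmono (le_of_lt (by simpa using hy))
      rw [← hF0]
      exact hm (Set.mem_Iic.2 h.le) (Set.mem_Iic.2 le_rfl) h.le
  have hlog : Real.log (q + p * Real.exp s) ≤ p * s + s ^ 2 / 8 := by
    have := hFnn s
    simp only [hFdef] at this
    linarith
  calc q + p * Real.exp s = Real.exp (Real.log (q + p * Real.exp s)) :=
        (Real.exp_log (hd s)).symm
    _ ≤ Real.exp (p * s + s ^ 2 / 8) := Real.exp_le_exp.2 hlog


lemma binom_mgf (n : ℕ) (r e : ℝ) :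
    ∑ j ∈ Finset.range (n + 1), (n.choose j : ℝ) * (1 - r) ^ j * r ^ (n - j) * e ^ j
      = (r + (1 - r) * e) ^ n := by
  rw [add_comm r, add_pow]
  refine Finset.sum_congr rfl fun j _ => ?_
  rw [mul_pow]; ring

theorem stmt_14 {Ω : Type*} [MeasurableSpace Ω] (μ : Measure Ω)
    [IsProbabilityMeasure μ] (n : ℕ) (hn : 0 < n) (r : ℝ) (τ : ℝ) (hτ : τ ∈ Set.Ioo (0:ℝ) (1/2)) (hr : r ∈ Set.Ioo (0:ℝ) (1/2))
    (Nbb Nsb : Ω → ℕ) (hmbb : Measurable Nbb) (hmsb : Measurable Nsb)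
    (hind : IndepFun Nbb Nsb μ)
    (hdbb : ∀ k, μ {ω | Nbb ω = k} =
      ENNReal.ofReal ((n.choose k : ℝ) * (1 - r) ^ k * r ^ (n - k)))
    (hdsb : ∀ k, μ {ω | Nsb ω = k} =
      ENNReal.ofReal ((n.choose k : ℝ) * (1 - r) ^ k * r ^ (n - k))) :
    (1 - r) ^ n * r ^ n ≤
      (μ {ω | (Nsb ω : ℝ) / ((Nsb ω : ℝ) + (Nbb ω : ℝ)) ≤ τ ∧
        ((n : ℝ) - (Nbb ω : ℝ)) / (2 * (n : ℝ) - (Nbb ω : ℝ) - (Nsb ω : ℝ)) ≤ τ}).toReal ∧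
    (μ {ω | (Nsb ω : ℝ) / ((Nsb ω : ℝ) + (Nbb ω : ℝ)) ≤ τ ∧
        ((n : ℝ) - (Nbb ω : ℝ)) / (2 * (n : ℝ) - (Nbb ω : ℝ) - (Nsb ω : ℝ)) ≤ τ}).toReal ≤
      Real.exp (-(2 * (1 - 2 * τ) ^ 2 * (1 - r) ^ 2 * n) / (τ ^ 2 + (1 - τ) ^ 2)) := by
  obtain ⟨hτ0, hτ2⟩ := hτ
  obtain ⟨hr0, hr2⟩ := hr
  set T : Set Ω := {ω | (Nsb ω : ℝ) / ((Nsb ω : ℝ) + (Nbb ω : ℝ)) ≤ τ ∧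
        ((n : ℝ) - (Nbb ω : ℝ)) / (2 * (n : ℝ) - (Nbb ω : ℝ) - (Nsb ω : ℝ)) ≤ τ} with hT
  -- preimage sets
  have epre : ∀ (f : Ω → ℕ) (k : ℕ), f ⁻¹' {k} = {ω | f ω = k} := fun f k => rfl
  have h1r : (0:ℝ) < 1 - r := by linarith
  have hqnn : ∀ k : ℕ, (0:ℝ) ≤ (n.choose k : ℝ) * (1 - r) ^ k * r ^ (n - k) := fun k =>
    mul_nonneg (mul_nonneg (Nat.cast_nonneg _) (pow_nonneg h1r.le _)) (pow_nonneg hr0.le _)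
  constructor
  · -- lower bound
    have hTlow : (Nbb ⁻¹' {n}) ∩ (Nsb ⁻¹' {0}) ⊆ T := by
      rintro ω ⟨h1, h2⟩
      simp only [Set.mem_preimage, Set.mem_singleton_iff] at h1 h2
      constructor
      · simp [h1, h2]; linarith
      · simp [h1, h2]; linarith
    have hElow : μ ((Nbb ⁻¹' {n}) ∩ (Nsb ⁻¹' {0})) = ENNReal.ofReal ((1 - r) ^ n * r ^ n) := by
      rw [hind.measure_inter_preimage_eq_mul _ _ (measurableSet_singleton n)
        (measurableSet_singleton 0), epre, epre, hdbb n, hdsb 0,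
        ← ENNReal.ofReal_mul (hqnn n)]
      congr 1
      simp [Nat.choose_self, Nat.sub_self]
    have hle := measure_mono (μ := μ) hTlow
    rw [hElow] at hle
    have := ENNReal.toReal_mono (measure_ne_top μ T) hle
    rwa [ENNReal.toReal_ofReal (by positivity)] at this
  · -- upper bound
    set D : ℝ := τ ^ 2 + (1 - τ) ^ 2 with hD
    have hDpos : 0 < D := by positivity
    set lam : ℝ := 4 * (1 - 2 * τ) * (1 - r) / D with hlam
    have hlampos : 0 < lam := by
      apply div_pos _ hDpos
      nlinarith
    set a : ℝ := lam * τ with ha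
    set b : ℝ := -(lam * (1 - τ)) with hb
    set q : ℕ → ℝ := fun k => (n.choose k : ℝ) * (1 - r) ^ k * r ^ (n - k) with hq
    have hqnn' : ∀ k, 0 ≤ q k := hqnn
    set A : Set Ω := {ω | (1 - τ) * (Nsb ω : ℝ) ≤ τ * (Nbb ω : ℝ)} with hA
    have hTA : T ⊆ A := by
      rintro ω ⟨h1, -⟩
      have hs : (0:ℝ) ≤ (Nsb ω : ℝ) := Nat.cast_nonneg _
      have hbnn : (0:ℝ) ≤ (Nbb ω : ℝ) := Nat.cast_nonneg _
      show (1 - τ) * (Nsb ω : ℝ) ≤ τ * (Nbb ω : ℝ)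
      rcases eq_or_lt_of_le (by positivity : (0:ℝ) ≤ (Nsb ω : ℝ) + (Nbb ω : ℝ)) with h | h
      · have e1 : (Nsb ω : ℝ) = 0 := by linarith
        have e2 : (Nbb ω : ℝ) = 0 := by linarith
        rw [e1, e2]; norm_num
      · rw [div_le_iff₀ h] at h1
        nlinarith
    set cell : ℕ × ℕ → Set Ω := fun p => Nbb ⁻¹' {p.1} ∩ Nsb ⁻¹' {p.2} with hcell
    have hcellμ : ∀ p : ℕ × ℕ, μ (cell p) = ENNReal.ofReal (q p.1 * q p.2) := by
      rintro ⟨j, k⟩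
      dsimp [hcell]
      rw [hind.measure_inter_preimage_eq_mul _ _ (measurableSet_singleton j)
        (measurableSet_singleton k), epre, epre, hdbb j, hdsb k,
        ← ENNReal.ofReal_mul (hqnn j)]
    have hAunion : A ⊆ ⋃ p : ℕ × ℕ, (A ∩ cell p) := by
      intro ω hω
      exact Set.mem_iUnion.2 ⟨(Nbb ω, Nsb ω), hω, rfl, rfl⟩
    have hcellbound : ∀ p : ℕ × ℕ, μ (A ∩ cell p) ≤
        ENNReal.ofReal ((q p.1 * Real.exp a ^ p.1) * (q p.2 * Real.exp b ^ p.2)) := by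
      rintro ⟨j, k⟩
      by_cases hc : (1 - τ) * (k : ℝ) ≤ τ * (j : ℝ)
      · calc μ (A ∩ cell (j, k)) ≤ μ (cell (j, k)) := measure_mono Set.inter_subset_right
          _ = ENNReal.ofReal (q j * q k) := hcellμ (j, k)
          _ ≤ _ := by
              apply ENNReal.ofReal_le_ofReal
              have h1 : (1:ℝ) ≤ Real.exp a ^ j * Real.exp b ^ k := by
                rw [← Real.exp_nat_mul, ← Real.exp_nat_mul, ← Real.exp_add]
                apply Real.one_le_exp
                have h2 : (j : ℝ) * a + (k : ℝ) * b = lam * (τ * j - (1 - τ) * k) := by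
                  rw [ha, hb]; ring
                rw [h2]
                have h3 : (0:ℝ) ≤ τ * j - (1 - τ) * k := by linarith
                positivity
              calc q j * q k = (q j * q k) * 1 := by ring
                _ ≤ (q j * q k) * (Real.exp a ^ j * Real.exp b ^ k) :=
                    mul_le_mul_of_nonneg_left h1 (mul_nonneg (hqnn' j) (hqnn' k))
                _ = (q j * Real.exp a ^ j) * (q k * Real.exp b ^ k) := by ring
      · have hempty : A ∩ cell (j, k) = ∅ := by
          apply Set.eq_empty_iff_forall_notMem.2
          rintro ω ⟨hωA, hω1, hω2⟩
          have hω1' : Nbb ω = j := hω1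
          have hω2' : Nsb ω = k := hω2
          have hωA' : (1 - τ) * (Nsb ω : ℝ) ≤ τ * (Nbb ω : ℝ) := hωA
          rw [hω1', hω2'] at hωA'
          exact hc hωA'
        rw [hempty]
        simp
    have hsum : μ A ≤ ENNReal.ofReal ((r + (1 - r) * Real.exp a) ^ n *
        (r + (1 - r) * Real.exp b) ^ n) := by
      have step1 : μ A ≤ ∑' p : ℕ × ℕ, μ (A ∩ cell p) :=
        (measure_mono hAunion).trans (measure_iUnion_le _)
      have step2 : (∑' p : ℕ × ℕ, μ (A ∩ cell p)) ≤
          ∑' p : ℕ × ℕ, ENNReal.ofReal ((q p.1 * Real.exp a ^ p.1) * (q p.2 * Real.exp b ^ p.2)) :=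
        ENNReal.tsum_le_tsum hcellbound
      have hzero : ∀ (e : ℝ), 0 ≤ e → ∀ (j : ℕ), j ∉ Finset.range (n + 1) →
          ENNReal.ofReal (q j * e ^ j) = 0 := by
        intro e he j hj
        have : n < j := by simpa using hj
        have hq0 : q j = 0 := by
          show (n.choose j : ℝ) * (1 - r) ^ j * r ^ (n - j) = 0
          rw [Nat.choose_eq_zero_of_lt this]
          simp
        rw [hq0]
        simp
      have hfin : ∀ e : ℝ, 0 ≤ e → (∑' j : ℕ, ENNReal.ofReal (q j * e ^ j)) =
          ENNReal.ofReal (∑ j ∈ Finset.range (n + 1), q j * e ^ j) := by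
        intro e he
        rw [tsum_eq_sum (hzero e he), ENNReal.ofReal_sum_of_nonneg (fun j _ => mul_nonneg (hqnn' j) (pow_nonneg he j))]
      have step3 : (∑' p : ℕ × ℕ, ENNReal.ofReal
            ((q p.1 * Real.exp a ^ p.1) * (q p.2 * Real.exp b ^ p.2))) =
          ENNReal.ofReal ((r + (1 - r) * Real.exp a) ^ n * (r + (1 - r) * Real.exp b) ^ n) := by
        have key : ∀ p : ℕ × ℕ, ENNReal.ofReal
            ((q p.1 * Real.exp a ^ p.1) * (q p.2 * Real.exp b ^ p.2)) =
            ENNReal.ofReal (q p.1 * Real.exp a ^ p.1) *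
              ENNReal.ofReal (q p.2 * Real.exp b ^ p.2) := by
          rintro ⟨j, k⟩
          exact ENNReal.ofReal_mul (by have := hqnn' j; positivity)
        simp_rw [key]
        rw [ENNReal.tsum_prod' (f := fun p : ℕ × ℕ => ENNReal.ofReal (q p.1 * Real.exp a ^ p.1) *
          ENNReal.ofReal (q p.2 * Real.exp b ^ p.2))]
        simp_rw [ENNReal.tsum_mul_left]
        rw [ENNReal.tsum_mul_right, hfin _ (Real.exp_pos a).le, hfin _ (Real.exp_pos b).le]
        have e1 : ∀ e : ℝ, (∑ j ∈ Finset.range (n + 1), q j * e ^ j) =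
            (r + (1 - r) * e) ^ n := by
          intro e
          rw [← binom_mgf n r e]
        rw [e1, e1, ← ENNReal.ofReal_mul (by positivity)]
      exact step1.trans (step2.trans_eq step3)
    -- now the scalar chain
    have hr1 : (0:ℝ) ≤ 1 - r := by linarith
    have hfac : ∀ s : ℝ, r + (1 - r) * Real.exp s ≤ Real.exp ((1 - r) * s + s ^ 2 / 8) := by
      intro s
      have := hoeff_scalar (p := 1 - r) hr1 (by linarith) s
      have e : (1 - (1 - r)) = r := by ring
      rw [e] at this
      exact this
    have hpowle : (r + (1 - r) * Real.exp a) ^ n * (r + (1 - r) * Real.exp b) ^ n ≤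
        Real.exp (-(2 * (1 - 2 * τ) ^ 2 * (1 - r) ^ 2 * n) / D) := by
      have hbase : ∀ s : ℝ, (0:ℝ) ≤ r + (1 - r) * Real.exp s := by
        intro s; positivity
      have h1 := pow_le_pow_left₀ (hbase a) (hfac a) n
      have h2 := pow_le_pow_left₀ (hbase b) (hfac b) n
      calc (r + (1 - r) * Real.exp a) ^ n * (r + (1 - r) * Real.exp b) ^ n
          ≤ Real.exp ((1 - r) * a + a ^ 2 / 8) ^ n * Real.exp ((1 - r) * b + b ^ 2 / 8) ^ n :=
            mul_le_mul h1 h2 (pow_nonneg (hbase b) n) (pow_nonneg (Real.exp_pos _).le n)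
        _ = Real.exp ((n : ℝ) * (((1 - r) * a + a ^ 2 / 8) + ((1 - r) * b + b ^ 2 / 8))) := by
            rw [← Real.exp_nat_mul, ← Real.exp_nat_mul, ← Real.exp_add]
            congr 1
            ring
        _ ≤ Real.exp (-(2 * (1 - 2 * τ) ^ 2 * (1 - r) ^ 2 * n) / D) := by
            apply Real.exp_le_exp.2
            rw [ha, hb, hlam]
            apply le_of_eq
            field_simp
            ring
    have hμT : μ T ≤ ENNReal.ofReal (Real.exp (-(2 * (1 - 2 * τ) ^ 2 * (1 - r) ^ 2 * n) / D)) :=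
      (measure_mono hTA).trans (hsum.trans (ENNReal.ofReal_le_ofReal hpowle))
    exact ENNReal.toReal_le_of_le_ofReal (Real.exp_pos _).le hμT
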